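/- Let v₁, v₂, v₃ be quaternions with v₃ ≠ 0. If v₁·v₃⁻¹·v₂ = v₂·v₃⁻¹·v₁, then v₁, v₂, v₃ are linearly dependent over ℝ (as elements of the four-dimensional real vector space ℍ). -/

import Mathlib

open Quaternion

lemma aux_commute (a b : Quaternion ℝ) (hc : a * b = b * a) :
    ∃ c₁ c₂ r : ℝ, (c₁ ≠ 0 ∨ c₂ ≠ 0) ∧ c₁ • a + c₂ • b = (r : Quaternion ℝ) := by
  have hI := congrArg QuaternionAlgebra.imI hc
  have hJ := congrArg QuaternionAlgebra.imJ hc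
  have hK := congrArg QuaternionAlgebra.imK hc
  simp only [Quaternion.imI_mul, Quaternion.imJ_mul, Quaternion.imK_mul] at hI hJ hK
  by_cases h1 : a.imI ≠ 0
  · refine ⟨-(b.imI / a.imI), 1, b.re - b.imI / a.imI * a.re, Or.inr one_ne_zero, ?_⟩
    ext <;>
      simp only [Quaternion.re_add, Quaternion.imI_add, Quaternion.imJ_add, Quaternion.imK_add,
        Quaternion.re_smul, Quaternion.imI_smul, Quaternion.imJ_smul, Quaternion.imK_smul,
        Quaternion.re_coe, Quaternion.imI_coe, Quaternion.imJ_coe, Quaternion.imK_coe,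
        smul_eq_mul, one_mul] <;>
      field_simp <;> linarith [hI, hJ, hK, mul_comm a.imI b.imJ]
  by_cases h2 : a.imJ ≠ 0
  · refine ⟨-(b.imJ / a.imJ), 1, b.re - b.imJ / a.imJ * a.re, Or.inr one_ne_zero, ?_⟩
    ext <;>
      simp only [Quaternion.re_add, Quaternion.imI_add, Quaternion.imJ_add, Quaternion.imK_add,
        Quaternion.re_smul, Quaternion.imI_smul, Quaternion.imJ_smul, Quaternion.imK_smul,
        Quaternion.re_coe, Quaternion.imI_coe, Quaternion.imJ_coe, Quaternion.imK_coe,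
        smul_eq_mul, one_mul] <;>
      field_simp <;> linarith
  by_cases h3 : a.imK ≠ 0
  · refine ⟨-(b.imK / a.imK), 1, b.re - b.imK / a.imK * a.re, Or.inr one_ne_zero, ?_⟩
    ext <;>
      simp only [Quaternion.re_add, Quaternion.imI_add, Quaternion.imJ_add, Quaternion.imK_add,
        Quaternion.re_smul, Quaternion.imI_smul, Quaternion.imJ_smul, Quaternion.imK_smul,
        Quaternion.re_coe, Quaternion.imI_coe, Quaternion.imJ_coe, Quaternion.imK_coe,
        smul_eq_mul, one_mul] <;>
      field_simp <;> linarith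
  · push_neg at h1 h2 h3
    exact ⟨1, 0, a.re, Or.inl one_ne_zero, by ext <;> simp [h1, h2, h3]⟩

theorem linearly_dependent_of_delta_eq
    (v₁ v₂ v₃ : Quaternion ℝ) (h₃ : v₃ ≠ 0)
    (h : v₁ * v₃⁻¹ * v₂ = v₂ * v₃⁻¹ * v₁) :
    ¬ LinearIndependent ℝ ![v₁, v₂, v₃] := by
  have hc : (v₁ * v₃⁻¹) * (v₂ * v₃⁻¹) = (v₂ * v₃⁻¹) * (v₁ * v₃⁻¹) := by
    rw [← mul_assoc, h, mul_assoc]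
  obtain ⟨c₁, c₂, r, hne, hrel⟩ := aux_commute _ _ hc
  have key : c₁ • v₁ + c₂ • v₂ = r • v₃ := by
    have := congrArg (· * v₃) hrel
    simpa [add_mul, smul_mul_assoc, mul_assoc, inv_mul_cancel₀ h₃,
      Quaternion.coe_mul_eq_smul] using this
  intro hli
  rw [Fintype.linearIndependent_iff] at hli
  have h0 := hli ![c₁, c₂, -r] (by
    simp only [Fin.sum_univ_three, Matrix.cons_val_zero, Matrix.cons_val_one, Matrix.head_cons,
      Matrix.cons_val_two, Matrix.tail_cons, neg_smul]
    rw [key]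
    simp)
  rcases hne with hne | hne
  · exact hne (h0 0)
  · exact hne (h0 1)
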